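/- Let F be a directed k-uniform hypergraph with edge set of size |F|, let G be a directed k-uniform hypergraph on a finite vertex set V, let S ⊆ V^k, and let S' be the union of those orbits O of the coordinatewise action of Aut(G) on V^k for which |O| ≤ |F|·|O ∩ S|. If f : V(F) → V is a homomorphism from F to G∖S', then there exists π ∈ Aut(G) such that π ∘ f is a homomorphism from F to G∖S. -/
import Mathlib


/-- A map `f : VF → V` is a homomorphism from the directed `k`-uniform hypergraph
`F` (a set of `k`-tuples of vertices of `VF`) to `G` if it maps every edge of `F`
to an edge of `G`. -/
def IsHGHom {k : ℕ} {VF V : Type*} (F : Set (Fin k → VF)) (G : Set (Fin k → V))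
    (f : VF → V) : Prop :=
  ∀ e ∈ F, (f ∘ e) ∈ G

/-- An automorphism of a directed `k`-uniform hypergraph `G` on vertex set `V`:
a bijective map `V → V` which is a homomorphism from `G` to itself. -/
def IsAuto {k : ℕ} {V : Type*} (G : Set (Fin k → V)) (π : V → V) : Prop :=
  Function.Bijective π ∧ ∀ e ∈ G, (π ∘ e) ∈ G

/-- The orbit of a `k`-tuple `x ∈ V^k` under the coordinatewise action of
`Aut(G)` on `V^k`. -/
def autOrbit {k : ℕ} {V : Type*} (G : Set (Fin k → V)) (x : Fin k → V) :
    Set (Fin k → V) :=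
  {y | ∃ π : V → V, IsAuto G π ∧ y = π ∘ x}

lemma isAuto_id {k : ℕ} {V : Type*} {G : Set (Fin k → V)} : IsAuto G id :=
  ⟨Function.bijective_id, fun e he => by simpa using he⟩

lemma isAuto_comp {k : ℕ} {V : Type*} {G : Set (Fin k → V)} {π σ : V → V}
    (hπ : IsAuto G π) (hσ : IsAuto G σ) : IsAuto G (π ∘ σ) :=
  ⟨hπ.1.comp hσ.1, fun e he => by
    have h := hπ.2 _ (hσ.2 e he)
    simpa [Function.comp_assoc] using h⟩

lemma isAuto_inv {k : ℕ} {V : Type*} [Finite V] {G : Set (Fin k → V)} {π : V → V}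
    (hπ : IsAuto G π) :
    ∃ σ : V → V, IsAuto G σ ∧ σ ∘ π = id ∧ π ∘ σ = id := by
  obtain ⟨hbij, hhom⟩ := hπ
  let E := Equiv.ofBijective π hbij
  have hEπ : ∀ a, E a = π a := fun a => rfl
  refine ⟨E.symm, ⟨E.symm.bijective, ?_⟩, ?_, ?_⟩
  · have hG : G.Finite := Set.toFinite G
    have hmaps : Set.MapsTo (fun e => π ∘ e) G G := fun e he => hhom e he
    have hinj : Set.InjOn (fun e => π ∘ e) G := fun a _ b _ h => by
      funext i; exact hbij.1 (congrFun h i)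
    have hsurj : Set.SurjOn (fun e => π ∘ e) G G :=
      ((hG.injOn_iff_bijOn_of_mapsTo hmaps).mp hinj).2.2
    intro e he
    obtain ⟨e', he', heq⟩ := hsurj he
    have : E.symm ∘ e = e' := by
      funext i
      have h2 : E (e' i) = e i := congrFun heq i
      show E.symm (e i) = e' i
      rw [← h2, Equiv.symm_apply_apply]
    rwa [this]
  · funext a; exact E.symm_apply_apply a
  · funext a; exact E.apply_symm_apply a

/-- Let `S ⊆ V^k` and let `S'` be the union of those orbits `O` of the
coordinatewise action of `Aut(G)` on `V^k` with `|O| ≤ |F| * |O ∩ S|`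
(equivalently, the set of tuples whose orbit satisfies this inequality). If
`f : VF → V` is a homomorphism from `F` to `G \ S'`, then there is `π ∈ Aut(G)`
such that `π ∘ f` is a homomorphism from `F` to `G \ S`. -/
theorem exists_auto_hom_avoiding (k : ℕ) (VF V : Type) [Fintype VF] [Fintype V]
    (F : Set (Fin k → VF)) (hF : ∀ e ∈ F, Function.Injective e)
    (G : Set (Fin k → V)) (hG : ∀ e ∈ G, Function.Injective e)
    (S : Set (Fin k → V))
    (S' : Set (Fin k → V))
    (hS' : S' = {x : Fin k → V |
      (autOrbit G x).ncard ≤ F.ncard * ((autOrbit G x) ∩ S).ncard})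
    (f : VF → V) (hf : IsHGHom F (G \ S') f) :
    ∃ π : V → V, IsAuto G π ∧ IsHGHom F (G \ S) (π ∘ f) := by
  classical
  -- trivial case: F empty
  by_cases hFne : F = ∅
  · exact ⟨id, isAuto_id, fun e he => by simp [hFne] at he⟩
  have hFcard : 0 < F.ncard := (Set.ncard_pos (Set.toFinite F)).mpr (Set.nonempty_iff_ne_empty.mpr hFne)
  -- the finset of automorphisms
  set A : Finset (V → V) := Finset.univ.filter (fun π => IsAuto G π) with hA
  have hmemA : ∀ π, π ∈ A ↔ IsAuto G π := by
    intro π; simp [hA]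
  have hAne : A.Nonempty := ⟨id, (hmemA id).mpr isAuto_id⟩
  -- orbit finsets
  have horbfin : ∀ x : Fin k → V, (autOrbit G x).Finite := fun x => Set.toFinite _
  have hxmem : ∀ x : Fin k → V, x ∈ autOrbit G x := fun x => ⟨id, isAuto_id, rfl⟩
  -- fiber cardinality is constant on the orbit
  have hfiber : ∀ (x y : Fin k → V), y ∈ autOrbit G x →
      (A.filter (fun π => π ∘ x = y)).card = (A.filter (fun π => π ∘ x = x)).card := by
    intro x y hy
    obtain ⟨π₀, hπ₀, rfl⟩ := hy
    obtain ⟨σ₀, hσ₀, hσπ, hπσ⟩ := isAuto_inv hπ₀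
    symm
    refine Finset.card_bij (fun τ _ => π₀ ∘ τ) ?_ ?_ ?_
    · intro τ hτ
      rw [Finset.mem_filter] at hτ ⊢
      refine ⟨(hmemA _).mpr (isAuto_comp hπ₀ ((hmemA _).mp hτ.1)), ?_⟩
      rw [Function.comp_assoc, hτ.2]
    · intro a ha b hb h
      funext i
      exact hπ₀.1.1 (congrFun h i)
    · intro π hπ
      rw [Finset.mem_filter] at hπ
      refine ⟨σ₀ ∘ π, Finset.mem_filter.mpr ⟨(hmemA _).mpr (isAuto_comp hσ₀ ((hmemA _).mp hπ.1)), ?_⟩, ?_⟩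
      · rw [Function.comp_assoc, hπ.2, ← Function.comp_assoc, hσπ, Function.id_comp]
      · show π₀ ∘ (σ₀ ∘ π) = π
        rw [← Function.comp_assoc, hπσ, Function.id_comp]
  -- A.card = |orbit x| * c x
  have horbcard : ∀ x : Fin k → V,
      A.card = (autOrbit G x).ncard * (A.filter (fun π => π ∘ x = x)).card := by
    intro x
    have hmapsto : ∀ π ∈ A, π ∘ x ∈ (horbfin x).toFinset := by
      intro π hπ
      rw [Set.Finite.mem_toFinset]
      exact ⟨π, (hmemA π).mp hπ, rfl⟩
    rw [Finset.card_eq_sum_card_fiberwise hmapsto,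
        Finset.sum_congr rfl (fun y hy => hfiber x y ((horbfin x).mem_toFinset.mp hy)),
        Finset.sum_const, smul_eq_mul, Set.ncard_eq_toFinset_card _ (horbfin x)]
  -- positivity of the stabilizer count
  have hstabpos : ∀ x : Fin k → V, 0 < (A.filter (fun π => π ∘ x = x)).card := by
    intro x
    refine Finset.card_pos.mpr ⟨id, Finset.mem_filter.mpr ⟨(hmemA id).mpr isAuto_id, rfl⟩⟩
  -- per-edge bad count
  have hbad : ∀ e ∈ F, F.ncard * (A.filter (fun π => π ∘ (f ∘ e) ∈ S)).card < A.card := by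
    intro e he
    set x := f ∘ e with hx
    have hxG : x ∈ G \ S' := hf e he
    have hxS' : F.ncard * ((autOrbit G x) ∩ S).ncard < (autOrbit G x).ncard := by
      have h2 := hxG.2
      rw [hS'] at h2
      exact Nat.lt_of_not_le (by simpa using h2)
    have hOS : ((autOrbit G x) ∩ S).Finite := Set.toFinite _
    have hmapsto : ∀ π ∈ A.filter (fun π => π ∘ x ∈ S), π ∘ x ∈ hOS.toFinset := by
      intro π hπ
      rw [Finset.mem_filter] at hπ
      rw [Set.Finite.mem_toFinset]
      exact ⟨⟨π, (hmemA π).mp hπ.1, rfl⟩, hπ.2⟩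
    have hsum : ∀ y ∈ hOS.toFinset,
        ((A.filter (fun π => π ∘ x ∈ S)).filter (fun π => π ∘ x = y)).card
        = (A.filter (fun π => π ∘ x = x)).card := by
      intro y hy
      have hyO : y ∈ autOrbit G x ∩ S := hOS.mem_toFinset.mp hy
      have heq : (A.filter (fun π => π ∘ x ∈ S)).filter (fun π => π ∘ x = y)
          = A.filter (fun π => π ∘ x = y) := by
        ext π
        simp only [Finset.mem_filter, Finset.filter_filter]
        constructor
        · rintro ⟨h1, _, h3⟩; exact ⟨h1, h3⟩
        · rintro ⟨h1, h3⟩; exact ⟨h1, h3 ▸ hyO.2, h3⟩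
      rw [heq, hfiber x y hyO.1]
    have hcount : (A.filter (fun π => π ∘ x ∈ S)).card
        = ((autOrbit G x) ∩ S).ncard * (A.filter (fun π => π ∘ x = x)).card := by
      rw [Finset.card_eq_sum_card_fiberwise hmapsto, Finset.sum_congr rfl hsum,
          Finset.sum_const, smul_eq_mul, Set.ncard_eq_toFinset_card _ hOS]
    calc F.ncard * (A.filter (fun π => π ∘ x ∈ S)).card
        = (F.ncard * ((autOrbit G x) ∩ S).ncard) * (A.filter (fun π => π ∘ x = x)).card := by
          rw [hcount, mul_assoc]
      _ < (autOrbit G x).ncard * (A.filter (fun π => π ∘ x = x)).card :=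
          (Nat.mul_lt_mul_right (hstabpos x)).mpr hxS'
      _ = A.card := (horbcard x).symm
  -- sum over edges
  have hFfin : F.Finite := Set.toFinite F
  have hFFcard : hFfin.toFinset.card = F.ncard := (Set.ncard_eq_toFinset_card _ hFfin).symm
  set Bad := A.filter (fun π => ∃ e ∈ F, π ∘ (f ∘ e) ∈ S) with hBad
  have hBadsub : Bad ⊆ hFfin.toFinset.biUnion (fun e => A.filter (fun π => π ∘ (f ∘ e) ∈ S)) := by
    intro π hπ
    rw [hBad, Finset.mem_filter] at hπ
    obtain ⟨hπA, e, he, hS⟩ := hπ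
    exact Finset.mem_biUnion.mpr ⟨e, hFfin.mem_toFinset.mpr he, Finset.mem_filter.mpr ⟨hπA, hS⟩⟩
  have hBadcard : Bad.card < A.card := by
    have h1 : Bad.card ≤ ∑ e ∈ hFfin.toFinset, (A.filter (fun π => π ∘ (f ∘ e) ∈ S)).card :=
      le_trans (Finset.card_le_card hBadsub) Finset.card_biUnion_le
    have h2 : F.ncard * Bad.card < F.ncard * A.card := by
      calc F.ncard * Bad.card
          ≤ F.ncard * ∑ e ∈ hFfin.toFinset, (A.filter (fun π => π ∘ (f ∘ e) ∈ S)).card :=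
            Nat.mul_le_mul_left _ h1
        _ = ∑ e ∈ hFfin.toFinset, F.ncard * (A.filter (fun π => π ∘ (f ∘ e) ∈ S)).card :=
            Finset.mul_sum _ _ _
        _ ≤ ∑ _e ∈ hFfin.toFinset, (A.card - 1) := by
            refine Finset.sum_le_sum fun e he => ?_
            exact Nat.le_sub_one_of_lt (hbad e (hFfin.mem_toFinset.mp he))
        _ = F.ncard * (A.card - 1) := by rw [Finset.sum_const, smul_eq_mul, hFFcard]
        _ < F.ncard * A.card := by
            exact (Nat.mul_lt_mul_left hFcard).mpr
              (Nat.sub_lt (Finset.card_pos.mpr hAne) Nat.one_pos)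
    exact Nat.lt_of_mul_lt_mul_left h2
  have hex : ∃ π ∈ A, π ∉ Bad := by
    by_contra h
    push_neg at h
    exact absurd (Finset.card_le_card h) (not_le.mpr hBadcard)
  obtain ⟨π, hπA, hπBad⟩ := hex
  refine ⟨π, (hmemA π).mp hπA, ?_⟩
  intro e he
  have hxG : f ∘ e ∈ G := (hf e he).1
  refine ⟨?_, ?_⟩
  · have h := ((hmemA π).mp hπA).2 _ hxG
    simpa [Function.comp_assoc] using h
  · intro hcontra
    apply hπBad
    rw [hBad, Finset.mem_filter]
    exact ⟨hπA, e, he, by simpa [Function.comp_assoc] using hcontra⟩
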